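/- Under the hypotheses of the asymmetric Lovász Local Lemma (x : A → (0,1) with Pr[A] ≤ x(A)·∏_{C ∈ Γ(A)}(1 − x(C)) for all A ∈ A), for any event B determined by the variables P, the conditional probability satisfies Pr[B | ⋂_{A ∈ A} Aᶜ] ≤ Pr[B] · ∏_{C ∈ Γ(B)}(1 − x(C))⁻¹. -/

import Mathlib

open MeasureTheory ProbabilityTheory

lemma lll_meas {n : ℕ} {α : Fin n → Type*} [∀ i, MeasurableSpace (α i)]
    (s : Finset (Fin n)) {B : Set (∀ i, α i)}
    (hB : MeasurableSet[MeasurableSpace.comap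
      (fun (ω : ∀ i, α i) (i : s) => ω i.1) MeasurableSpace.pi] B) :
    MeasurableSet B := by
  have hm : Measurable (fun (ω : ∀ i, α i) (i : s) => ω i.1) :=
    measurable_pi_lambda _ fun i => measurable_pi_apply i.1
  exact hm.comap_le _ hB

lemma lll_comap_mono {n : ℕ} {α : Fin n → Type*} [∀ i, MeasurableSpace (α i)]
    {s s' : Finset (Fin n)} (hss : s ⊆ s') {B : Set (∀ i, α i)}
    (hB : MeasurableSet[MeasurableSpace.comap
      (fun (ω : ∀ i, α i) (i : s) => ω i.1) MeasurableSpace.pi] B) :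
    MeasurableSet[MeasurableSpace.comap
      (fun (ω : ∀ i, α i) (i : s') => ω i.1) MeasurableSpace.pi] B := by
  obtain ⟨b, hb, rfl⟩ := hB
  refine ⟨(fun (ω : ∀ i : s', α i.1) (i : s) => ω ⟨i.1, hss i.2⟩) ⁻¹' b,
    (measurable_pi_lambda _ fun i => measurable_pi_apply _) hb, rfl⟩

lemma lll_indep {n : ℕ} {α : Fin n → Type*} [∀ i, MeasurableSpace (α i)]
    (μ : ∀ i, Measure (α i)) [∀ i, IsProbabilityMeasure (μ i)]
    (s t : Finset (Fin n)) (hst : Disjoint s t)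
    {B C : Set (∀ i, α i)}
    (hB : MeasurableSet[MeasurableSpace.comap
      (fun (ω : ∀ i, α i) (i : s) => ω i.1) MeasurableSpace.pi] B)
    (hC : MeasurableSet[MeasurableSpace.comap
      (fun (ω : ∀ i, α i) (i : t) => ω i.1) MeasurableSpace.pi] C) :
    Measure.pi μ (B ∩ C) = Measure.pi μ B * Measure.pi μ C := by
  classical
  obtain ⟨b, hb, rfl⟩ := hB
  obtain ⟨c, hc, rfl⟩ := hC
  have hmp := measurePreserving_piEquivPiSubtypeProd (α := α) μ (fun i => i ∈ s)
  have hFm : Measurable (fun (ω : ∀ i : Subtype (· ∈ s), α i.1) (i : s) => ω ⟨i.1, i.2⟩) :=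
    measurable_pi_lambda _ fun i => measurable_pi_apply _
  have hGm : Measurable (fun (ω : ∀ i : {i // ¬ i ∈ s}, α i.1) (i : t) =>
      ω ⟨i.1, fun h => (Finset.disjoint_left.mp hst h i.2)⟩) :=
    measurable_pi_lambda _ fun i => measurable_pi_apply _
  have happly : ∀ (b' : Set (∀ i : s, α i.1)) (c' : Set (∀ i : t, α i.1)),
      MeasurableSet b' → MeasurableSet c' →
      Measure.pi μ ((fun (ω : ∀ i, α i) (i : s) => ω i.1) ⁻¹' b' ∩
        (fun (ω : ∀ i, α i) (i : t) => ω i.1) ⁻¹' c')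
      = Measure.pi (fun i : Subtype (· ∈ s) => μ i) ((fun ω (i : s) => ω ⟨i.1, i.2⟩) ⁻¹' b') *
        Measure.pi (fun i : {i // ¬ i ∈ s} => μ i)
          ((fun ω (i : t) => ω ⟨i.1, fun h => (Finset.disjoint_left.mp hst h i.2)⟩) ⁻¹' c') := by
    intro b' c' hb' hc'
    have key : (fun (ω : ∀ i, α i) (i : s) => ω i.1) ⁻¹' b' ∩
        (fun (ω : ∀ i, α i) (i : t) => ω i.1) ⁻¹' c'
      = (MeasurableEquiv.piEquivPiSubtypeProd α (· ∈ s)) ⁻¹'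
        (((fun ω (i : s) => ω ⟨i.1, i.2⟩) ⁻¹' b') ×ˢ
         ((fun ω (i : t) => ω ⟨i.1, fun h => (Finset.disjoint_left.mp hst h i.2)⟩) ⁻¹' c')) := rfl
    rw [key, hmp.measure_preimage ((hFm hb').prod (hGm hc')).nullMeasurableSet,
      Measure.prod_prod]
    congr!
  have h1 := happly b Set.univ hb MeasurableSet.univ
  have h2 := happly Set.univ c MeasurableSet.univ hc
  have h3 := happly b c hb hc
  simp only [Set.preimage_univ, Set.inter_univ, Set.univ_inter, measure_univ,
    mul_one, one_mul] at h1 h2 h3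
  rw [h3, h1, h2]
theorem stmt6 {n m : ℕ} (α : Fin n → Type*) [∀ i, MeasurableSpace (α i)]
    (μ : ∀ i, Measure (α i)) [∀ i, IsProbabilityMeasure (μ i)]
    (A : Fin m → Set (∀ i, α i)) (vbl : Fin m → Finset (Fin n))
    (hmeas : ∀ j, MeasurableSet[MeasurableSpace.comap
      (fun (ω : ∀ i, α i) (i : vbl j) => ω i.1) MeasurableSpace.pi] (A j))
    (x : Fin m → ℝ) (hx : ∀ j, x j ∈ Set.Ioo (0:ℝ) 1)
    (hcond : ∀ j, ((Measure.pi μ) (A j)).toReal ≤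
      x j * ∏ k ∈ Finset.univ.filter (fun k => k ≠ j ∧ (vbl j ∩ vbl k).Nonempty), (1 - x k))
    (B : Set (∀ i, α i)) (vblB : Finset (Fin n))
    (hmeasB : MeasurableSet[MeasurableSpace.comap
      (fun (ω : ∀ i, α i) (i : vblB) => ω i.1) MeasurableSpace.pi] B) :
    ((Measure.pi μ)[|⋂ j, (A j)ᶜ] B).toReal ≤
      ((Measure.pi μ) B).toReal *
        ∏ k ∈ Finset.univ.filter (fun k => (vblB ∩ vbl k).Nonempty), (1 - x k)⁻¹ := by
  classical
  set ν := Measure.pi μ with hν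
  set P : Set (∀ i, α i) → ℝ := fun s => (ν s).toReal with hPdef
  have hfin : ∀ s : Set (∀ i, α i), ν s ≠ ⊤ := fun s => measure_ne_top ν s
  have hPmono : ∀ {s t : Set (∀ i, α i)}, s ⊆ t → P s ≤ P t := fun h =>
    (ENNReal.toReal_le_toReal (hfin _) (hfin _)).mpr (measure_mono h)
  have hPnn : ∀ s, 0 ≤ P s := fun s => ENNReal.toReal_nonneg
  have hPuniv : P Set.univ = 1 := by simp [hPdef]
  have hPsplit : ∀ (u : Set (∀ i, α i)) {t}, MeasurableSet t →
      P u = P (u ∩ t) + P (u ∩ tᶜ) := by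
    intro u t ht
    have h := measure_inter_add_diff (μ := ν) u ht
    rw [Set.diff_eq] at h
    rw [hPdef]
    simp only
    rw [← ENNReal.toReal_add (hfin _) (hfin _), h]
  set I : Finset (Fin m) → Set (∀ i, α i) := fun S => ⋂ j ∈ S, (A j)ᶜ with hI
  have hIinsert : ∀ (a : Fin m) (S : Finset (Fin m)),
      I (insert a S) = (A a)ᶜ ∩ I S := by
    intro a S
    simp [hI, Set.biInter_insert]
  have hIempty : I ∅ = Set.univ := by simp [hI]
  have hImono : ∀ {S T : Finset (Fin m)}, S ⊆ T → I T ⊆ I S := by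
    intro S T h ω hω
    simp only [hI, Set.mem_iInter] at hω ⊢
    exact fun j hj => hω j (h hj)
  have hIcomap : ∀ S : Finset (Fin m), MeasurableSet[MeasurableSpace.comap
      (fun (ω : ∀ i, α i) (i : (S.biUnion vbl : Finset (Fin n))) => ω i.1)
        MeasurableSpace.pi] (I S) := by
    intro S
    induction S using Finset.induction_on with
    | empty => rw [hIempty]; exact MeasurableSet.univ
    | insert a S ha ih =>
      rw [hIinsert]
      have h1 : vbl a ⊆ (insert a S).biUnion vbl :=
        Finset.subset_biUnion_of_mem vbl (Finset.mem_insert_self a S)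
      have h2 : S.biUnion vbl ⊆ (insert a S).biUnion vbl :=
        Finset.biUnion_subset_biUnion_of_subset_left vbl (Finset.subset_insert a S)
      exact ((lll_comap_mono h1 (hmeas a)).compl).inter (lll_comap_mono h2 ih)
  have hAm : ∀ j, MeasurableSet (A j) := fun j => lll_meas _ (hmeas j)
  have hImeas : ∀ S, MeasurableSet (I S) := fun S => lll_meas _ (hIcomap S)
  have hprod_le_one : ∀ (T : Finset (Fin m)), ∏ k ∈ T, (1 - x k) ≤ 1 :=
    fun T => Finset.prod_le_one (fun k _ => by linarith [(hx k).2])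
      (fun k _ => by linarith [(hx k).1])
  have hprod_pos : ∀ (T : Finset (Fin m)), 0 < ∏ k ∈ T, (1 - x k) :=
    fun T => Finset.prod_pos (fun k _ => by linarith [(hx k).2])
  -- Main LLL lemma, by strong induction on the size of the conditioning set
  have main : ∀ N : ℕ, ∀ S : Finset (Fin m), S.card ≤ N → ∀ j ∉ S,
      P (A j ∩ I S) ≤ x j * P (I S) := by
    intro N
    induction N with
    | zero =>
      intro S hS j _
      have hSe : S = ∅ := Finset.card_eq_zero.mp (Nat.le_zero.mp hS)
      subst hSe
      rw [hIempty, Set.inter_univ, hPuniv, mul_one]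
      calc P (A j) ≤ x j * ∏ k ∈ Finset.univ.filter
            (fun k => k ≠ j ∧ (vbl j ∩ vbl k).Nonempty), (1 - x k) := hcond j
        _ ≤ x j * 1 := mul_le_mul_of_nonneg_left (hprod_le_one _) (hx j).1.le
        _ = x j := mul_one _
    | succ N ih =>
      intro S hS j hj
      set S₁ := S.filter (fun k => (vbl j ∩ vbl k).Nonempty) with hS₁
      set S₂ := S.filter (fun k => ¬ (vbl j ∩ vbl k).Nonempty) with hS₂
      have hunion : S₁ ∪ S₂ = S := Finset.filter_union_filter_not_eq _ S
      have H : ∀ T : Finset (Fin m), T ⊆ S₁ →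
          (∏ k ∈ T, (1 - x k)) * P (I S₂) ≤ P (I (T ∪ S₂)) := by
        intro T
        induction T using Finset.induction_on with
        | empty => intro _; simp
        | insert a T haT ihT =>
          intro hsub
          have hTsub : T ⊆ S₁ := (Finset.insert_subset_iff.mp hsub).2
          have haS₁ : a ∈ S₁ := (Finset.insert_subset_iff.mp hsub).1
          have haS : a ∈ S := Finset.mem_of_mem_filter a haS₁
          have haS₂ : a ∉ S₂ := by
            rw [hS₂, Finset.mem_filter]
            push_neg
            intro _
            exact (Finset.mem_filter.mp haS₁).2
          have hanot : a ∉ T ∪ S₂ := by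
            rw [Finset.mem_union]
            push_neg
            exact ⟨haT, haS₂⟩
          have hcard : (T ∪ S₂).card ≤ N := by
            have hsubS : T ∪ S₂ ⊆ S.erase a := by
              intro k hk
              rw [Finset.mem_erase]
              constructor
              · rintro rfl; exact hanot hk
              · rcases Finset.mem_union.mp hk with h | h
                · exact Finset.mem_of_mem_filter k (hTsub h)
                · exact Finset.mem_of_mem_filter k h
            calc (T ∪ S₂).card ≤ (S.erase a).card := Finset.card_le_card hsubS
              _ = S.card - 1 := Finset.card_erase_of_mem haS
              _ ≤ N := by omega
          have hmain := ih (T ∪ S₂) hcard a hanot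
          have hsplit := hPsplit (I (T ∪ S₂)) (hAm a)
          have hIins : I (insert a T ∪ S₂) = (A a)ᶜ ∩ I (T ∪ S₂) := by
            rw [Finset.insert_union, hIinsert]
          rw [hIins, Finset.prod_insert haT]
          have h1x : 0 ≤ 1 - x a := by linarith [(hx a).2]
          have hcomm : P (A a ∩ I (T ∪ S₂)) = P (I (T ∪ S₂) ∩ A a) := by
            rw [Set.inter_comm]
          have hcomm2 : P ((A a)ᶜ ∩ I (T ∪ S₂)) = P (I (T ∪ S₂) ∩ (A a)ᶜ) := by
            rw [Set.inter_comm]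
          rw [hcomm2]
          nlinarith [mul_le_mul_of_nonneg_left (ihT hTsub) h1x, ihT hTsub,
            hPnn (I (T ∪ S₂))]
      have hsub2 : I S ⊆ I S₂ := hImono (Finset.filter_subset _ S)
      have hstep1 : P (A j ∩ I S) ≤ P (A j ∩ I S₂) :=
        hPmono (Set.inter_subset_inter_right _ hsub2)
      have hdisjv : Disjoint (vbl j) (S₂.biUnion vbl) := by
        rw [Finset.disjoint_biUnion_right]
        intro k hk
        rw [hS₂, Finset.mem_filter] at hk
        rw [Finset.disjoint_left]
        intro i hi hi'
        exact hk.2 ⟨i, Finset.mem_inter.mpr ⟨hi, hi'⟩⟩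
      have hindep : ν (A j ∩ I S₂) = ν (A j) * ν (I S₂) :=
        lll_indep μ (vbl j) (S₂.biUnion vbl) hdisjv (hmeas j) (hIcomap S₂)
      have hstep2 : P (A j ∩ I S₂) = P (A j) * P (I S₂) := by
        rw [hPdef]
        simp only
        rw [hindep, ENNReal.toReal_mul]
      have hS₁sub : S₁ ⊆ Finset.univ.filter
          (fun k => k ≠ j ∧ (vbl j ∩ vbl k).Nonempty) := by
        intro k hk
        rw [hS₁, Finset.mem_filter] at hk
        rw [Finset.mem_filter]
        refine ⟨Finset.mem_univ k, ?_, hk.2⟩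
        rintro rfl
        exact hj hk.1
      have hprodle : ∏ k ∈ Finset.univ.filter
            (fun k => k ≠ j ∧ (vbl j ∩ vbl k).Nonempty), (1 - x k)
          ≤ ∏ k ∈ S₁, (1 - x k) := by
        rw [← Finset.prod_sdiff hS₁sub]
        nlinarith [hprod_le_one ((Finset.univ.filter
          (fun k => k ≠ j ∧ (vbl j ∩ vbl k).Nonempty)) \ S₁), hprod_pos S₁,
          hprod_pos ((Finset.univ.filter
          (fun k => k ≠ j ∧ (vbl j ∩ vbl k).Nonempty)) \ S₁)]
      have h3 : P (A j) ≤ x j * ∏ k ∈ S₁, (1 - x k) :=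
        le_trans (hcond j) (mul_le_mul_of_nonneg_left hprodle (hx j).1.le)
      have h4 := H S₁ (subset_refl _)
      rw [hunion] at h4
      calc P (A j ∩ I S) ≤ P (A j) * P (I S₂) := by rw [← hstep2]; exact hstep1
        _ ≤ (x j * ∏ k ∈ S₁, (1 - x k)) * P (I S₂) :=
            mul_le_mul_of_nonneg_right h3 (hPnn _)
        _ = x j * ((∏ k ∈ S₁, (1 - x k)) * P (I S₂)) := by ring
        _ ≤ x j * P (I S) := mul_le_mul_of_nonneg_left h4 (hx j).1.le
  have main' : ∀ S : Finset (Fin m), ∀ j ∉ S, P (A j ∩ I S) ≤ x j * P (I S) :=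
    fun S j hj => main S.card S le_rfl j hj
  -- general lower bound
  have lower : ∀ (T S₂ : Finset (Fin m)), Disjoint T S₂ →
      (∏ k ∈ T, (1 - x k)) * P (I S₂) ≤ P (I (T ∪ S₂)) := by
    intro T
    induction T using Finset.induction_on with
    | empty => intro S₂ _; simp
    | insert a T haT ihT =>
      intro S₂ hd
      have hd' : Disjoint T S₂ :=
        Finset.disjoint_of_subset_left (Finset.subset_insert a T) hd
      have haS₂ : a ∉ S₂ := Finset.disjoint_left.mp hd (Finset.mem_insert_self a T)
      have hanot : a ∉ T ∪ S₂ := by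
        rw [Finset.mem_union]
        push_neg
        exact ⟨haT, haS₂⟩
      have hmain := main' (T ∪ S₂) a hanot
      have hsplit := hPsplit (I (T ∪ S₂)) (hAm a)
      have hIins : I (insert a T ∪ S₂) = (A a)ᶜ ∩ I (T ∪ S₂) := by
        rw [Finset.insert_union, hIinsert]
      rw [hIins, Finset.prod_insert haT]
      have h1x : 0 ≤ 1 - x a := by linarith [(hx a).2]
      have hcomm : P (A a ∩ I (T ∪ S₂)) = P (I (T ∪ S₂) ∩ A a) := by
        rw [Set.inter_comm]
      have hcomm2 : P ((A a)ᶜ ∩ I (T ∪ S₂)) = P (I (T ∪ S₂) ∩ (A a)ᶜ) := by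
        rw [Set.inter_comm]
      rw [hcomm2]
      nlinarith [mul_le_mul_of_nonneg_left (ihT S₂ hd') h1x, ihT S₂ hd',
        hPnn (I (T ∪ S₂))]
  have Ipos : ∀ S : Finset (Fin m), 0 < P (I S) := by
    intro S
    have h := lower S ∅ (Finset.disjoint_empty_right _)
    rw [hIempty, hPuniv, Finset.union_empty, mul_one] at h
    linarith [hprod_pos S]
  -- final computation
  set T₁ := Finset.univ.filter (fun k => (vblB ∩ vbl k).Nonempty) with hT₁
  set T₂ := Finset.univ.filter (fun k => ¬ (vblB ∩ vbl k).Nonempty) with hT₂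
  have hu : T₁ ∪ T₂ = Finset.univ := Finset.filter_union_filter_not_eq _ _
  have hIuniv : (⋂ j, (A j)ᶜ) = I Finset.univ := by
    simp [hI]
  have hdisjv : Disjoint vblB (T₂.biUnion vbl) := by
    rw [Finset.disjoint_biUnion_right]
    intro k hk
    rw [hT₂, Finset.mem_filter] at hk
    rw [Finset.disjoint_left]
    intro i hi hi'
    exact hk.2 ⟨i, Finset.mem_inter.mpr ⟨hi, hi'⟩⟩
  have hindB : ν (B ∩ I T₂) = ν B * ν (I T₂) :=
    lll_indep μ vblB (T₂.biUnion vbl) hdisjv hmeasB (hIcomap T₂)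
  have hX : P (I Finset.univ ∩ B) ≤ P B * P (I T₂) := by
    have h1 : P (I Finset.univ ∩ B) ≤ P (B ∩ I T₂) := by
      rw [Set.inter_comm]
      exact hPmono (Set.inter_subset_inter_right _
        (hImono (Finset.subset_univ T₂)))
    have h2 : P (B ∩ I T₂) = P B * P (I T₂) := by
      rw [hPdef]
      simp only
      rw [hindB, ENNReal.toReal_mul]
    linarith
  have hlow : (∏ k ∈ T₁, (1 - x k)) * P (I T₂) ≤ P (I Finset.univ) := by
    have h := lower T₁ T₂ (Finset.disjoint_filter_filter_not _ _ _)
    rw [hu] at h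
    exact h
  rw [hIuniv, cond_apply (hImeas Finset.univ), ENNReal.toReal_mul,
    ENNReal.toReal_inv]
  have hgoal : (ν (I Finset.univ)).toReal⁻¹ * (ν (I Finset.univ ∩ B)).toReal
      ≤ (ν B).toReal * ∏ k ∈ T₁, (1 - x k)⁻¹ := by
    rw [Finset.prod_inv_distrib]
    have hq := hprod_pos T₁
    have hc := Ipos Finset.univ
    have hb2 := Ipos T₂
    rw [inv_mul_eq_div, ← div_eq_mul_inv, div_le_div_iff₀ hc hq]
    nlinarith [mul_le_mul_of_nonneg_right hX (le_of_lt hq),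
      mul_le_mul_of_nonneg_left hlow (hPnn B)]
  exact hgoal
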